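/- Let θ₁*,…,θ_n* ∈ ℝ^m, let θ* = (1/n)∑_i θ_i*, and H ≥ 0. Define Ψ = (√H / n²)·∑_{j=1}^n ∑_{k=1}^n ‖θ_j* − θ_k*‖₁. Suppose for each i there is a function J_i : ℝ^m → ℝ that is H-smooth with J_i(θ_i*) = 0 and ∇J_i(θ_i*) = 0. Then (1/n)·∑_i J_i(θ*) ≤ n³·Ψ². -/

import Mathlib

lemma stmt10_norm_le_l1 (m : ℕ) (x : EuclideanSpace ℝ (Fin m)) : ‖x‖ ≤ ∑ i, |x i| := by
  rw [EuclideanSpace.norm_eq]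
  have h1 : ∑ i, ‖x i‖ ^ 2 ≤ (∑ i, |x i|) ^ 2 := by
    simpa [Real.norm_eq_abs] using
      Finset.sum_sq_le_sq_sum_of_nonneg (s := Finset.univ) (f := fun i => |x i|)
        (fun i _ => abs_nonneg _)
  calc Real.sqrt (∑ i, ‖x i‖ ^ 2) ≤ Real.sqrt ((∑ i, |x i|) ^ 2) := Real.sqrt_le_sqrt h1
    _ = ∑ i, |x i| := Real.sqrt_sq (Finset.sum_nonneg fun i _ => abs_nonneg _)

lemma stmt10_descent (m : ℕ) (H : ℝ) (hH : 0 ≤ H) (f : EuclideanSpace ℝ (Fin m) → ℝ)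
    (hdiff : Differentiable ℝ f)
    (hlip : ∀ x y, ‖gradient f x - gradient f y‖ ≤ H * ‖x - y‖)
    (x y : EuclideanSpace ℝ (Fin m)) (hval : f x = 0) (hgrad : gradient f x = 0) :
    f y ≤ H * ‖y - x‖ ^ 2 := by
  set r := ‖y - x‖ with hr
  have hr0 : 0 ≤ r := norm_nonneg _
  have key : ‖f y - f x‖ ≤ (H * r) * ‖y - x‖ := by
    apply Convex.norm_image_sub_le_of_norm_fderiv_le (s := Metric.closedBall x r)
      (fun z _ => hdiff.differentiableAt) _ (convex_closedBall x r)
      (Metric.mem_closedBall_self hr0) (by simp [Metric.mem_closedBall, dist_eq_norm, hr])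
    intro z hz
    have h1 : ‖fderiv ℝ f z‖ = ‖gradient f z‖ := by
      rw [gradient, LinearIsometryEquiv.norm_map]
    rw [h1]
    have h2 : ‖gradient f z‖ = ‖gradient f z - gradient f x‖ := by rw [hgrad, sub_zero]
    rw [h2]
    calc ‖gradient f z - gradient f x‖ ≤ H * ‖z - x‖ := hlip z x
      _ ≤ H * r := by
        exact mul_le_mul_of_nonneg_left (by simpa [Metric.mem_closedBall, dist_eq_norm] using hz) hH
  have : f y - f x ≤ (H * r) * r := le_trans (le_abs_self _) (by simpa [hr] using key)
  simpa [hval, sq, mul_assoc] using this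

theorem stmt_10 (m n : ℕ) (hn : 0 < n) (H : ℝ) (hH : 0 ≤ H)
    (J : Fin n → EuclideanSpace ℝ (Fin m) → ℝ)
    (hdiff : ∀ i, Differentiable ℝ (J i))
    (hlip : ∀ i x y, ‖gradient (J i) x - gradient (J i) y‖ ≤ H * ‖x - y‖)
    (θ : Fin n → EuclideanSpace ℝ (Fin m))
    (hval : ∀ i, J i (θ i) = 0) (hgrad : ∀ i, gradient (J i) (θ i) = 0)
    (θstar : EuclideanSpace ℝ (Fin m)) (hstar : θstar = (n : ℝ)⁻¹ • ∑ i, θ i)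
    (Ψ : ℝ)
    (hΨ : Ψ = (Real.sqrt H / (n : ℝ) ^ 2) * ∑ j, ∑ k, ∑ i, |θ j i - θ k i|) :
    (n : ℝ)⁻¹ * ∑ i, J i θstar ≤ (n : ℝ) ^ 3 * Ψ ^ 2 := by
  have hn' : (0 : ℝ) < n := Nat.cast_pos.mpr hn
  set S : ℝ := ∑ j, ∑ k, ∑ i, |θ j i - θ k i| with hS
  have hSnn : 0 ≤ S :=
    Finset.sum_nonneg fun _ _ => Finset.sum_nonneg fun _ _ =>
      Finset.sum_nonneg fun _ _ => abs_nonneg _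
  -- each distance to the mean is bounded by S / n
  have hdist : ∀ i, ‖θstar - θ i‖ ≤ S / n := by
    intro i
    have hrepr : θstar - θ i = (n : ℝ)⁻¹ • ∑ j, (θ j - θ i) := by
      rw [hstar, Finset.sum_sub_distrib, smul_sub]
      congr 1
      rw [Finset.sum_const, Finset.card_univ, Fintype.card_fin, ← Nat.cast_smul_eq_nsmul ℝ, smul_smul,
        inv_mul_cancel₀ (ne_of_gt hn'), one_smul]
    rw [hrepr]
    have h1 : ‖∑ j, (θ j - θ i)‖ ≤ S := by
      calc ‖∑ j, (θ j - θ i)‖ ≤ ∑ j, ‖θ j - θ i‖ := norm_sum_le _ _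
        _ ≤ ∑ j, ∑ c, |θ j c - θ i c| := by
            apply Finset.sum_le_sum
            intro j _
            simpa using stmt10_norm_le_l1 m (θ j - θ i)
        _ ≤ S := by
            apply Finset.sum_le_sum
            intro j _
            exact Finset.single_le_sum (f := fun k => ∑ c, |θ j c - θ k c|)
              (fun k _ => Finset.sum_nonneg fun _ _ => abs_nonneg _) (Finset.mem_univ i)
    calc ‖(n : ℝ)⁻¹ • ∑ j, (θ j - θ i)‖ = (n : ℝ)⁻¹ * ‖∑ j, (θ j - θ i)‖ := by
          rw [norm_smul, Real.norm_eq_abs, abs_of_pos (inv_pos.mpr hn')]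
      _ ≤ (n : ℝ)⁻¹ * S := by
          exact mul_le_mul_of_nonneg_left h1 (le_of_lt (inv_pos.mpr hn'))
      _ = S / n := by ring
  -- descent bound per sample
  have hJ : ∀ i, J i θstar ≤ H * (S / n) ^ 2 := by
    intro i
    calc J i θstar ≤ H * ‖θstar - θ i‖ ^ 2 :=
          stmt10_descent m H hH (J i) (hdiff i) (hlip i) (θ i) θstar (hval i) (hgrad i)
      _ ≤ H * (S / n) ^ 2 := by
          apply mul_le_mul_of_nonneg_left _ hH
          exact pow_le_pow_left₀ (norm_nonneg _) (hdist i) 2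
  have hsum : ∑ i, J i θstar ≤ n * (H * (S / n) ^ 2) := by
    calc ∑ i, J i θstar ≤ ∑ _i : Fin n, H * (S / n) ^ 2 :=
          Finset.sum_le_sum fun i _ => hJ i
      _ = n * (H * (S / n) ^ 2) := by
          rw [Finset.sum_const, Finset.card_univ, Fintype.card_fin, nsmul_eq_mul]
  have hRHS : (n : ℝ) ^ 3 * Ψ ^ 2 = H * S ^ 2 / n := by
    rw [hΨ, mul_pow, div_pow, Real.sq_sqrt hH]
    field_simp
  rw [hRHS]
  have h2 : (n : ℝ)⁻¹ * ∑ i, J i θstar ≤ (n : ℝ)⁻¹ * (n * (H * (S / n) ^ 2)) :=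
    mul_le_mul_of_nonneg_left hsum (le_of_lt (inv_pos.mpr hn'))
  calc (n : ℝ)⁻¹ * ∑ i, J i θstar ≤ (n : ℝ)⁻¹ * (n * (H * (S / n) ^ 2)) := h2
    _ = H * S ^ 2 / n ^ 2 := by field_simp; try ring
    _ ≤ H * S ^ 2 / n := by
        apply div_le_div_of_nonneg_left (by positivity) hn'
        have h1n : (1 : ℝ) ≤ n := by exact_mod_cast hn
        nlinarith [hn', h1n]
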